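/- Let minmod be as above and define the reconstructed east/west values ρ_i^E = ρ̄_i + (Δx/2)·σ_i and ρ_i^W = ρ̄_i - (Δx/2)·σ_i, where σ_i = minmod((ρ̄_i - ρ̄_{i-1})/Δx, (ρ̄_{i+1} - ρ̄_{i-1})/(2Δx), (ρ̄_{i+1} - ρ̄_i)/Δx). Then ρ_i^E and ρ_i^W both lie in the closed interval [min{ρ̄_{i-1}, ρ̄_i, ρ̄_{i+1}}, max{ρ̄_{i-1}, ρ̄_i, ρ̄_{i+1}}]. -/
import Mathlib


/-- The minmod slope limiter. -/
noncomputable def minmod (a b c : ℝ) : ℝ :=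
  if 0 < a ∧ 0 < b ∧ 0 < c then min a (min b c)
  else if a < 0 ∧ b < 0 ∧ c < 0 then max a (max b c)
  else 0

theorem minmod_reconstruction_local_max_principle
    (Δx : ℝ) (hΔx : 0 < Δx) (ρm ρi ρp : ℝ)
    (σ : ℝ) (hσ : σ = minmod ((ρi - ρm) / Δx) ((ρp - ρm) / (2 * Δx)) ((ρp - ρi) / Δx))
    (ρE ρW : ℝ) (hE : ρE = ρi + Δx / 2 * σ) (hW : ρW = ρi - Δx / 2 * σ) :
    ρE ∈ Set.Icc (min ρm (min ρi ρp)) (max ρm (max ρi ρp)) ∧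
    ρW ∈ Set.Icc (min ρm (min ρi ρp)) (max ρm (max ρi ρp)) := by
  have key : (0 ≤ σ ∧ σ * Δx ≤ ρi - ρm ∧ σ * Δx ≤ ρp - ρi) ∨
      (σ ≤ 0 ∧ ρi - ρm ≤ σ * Δx ∧ ρp - ρi ≤ σ * Δx) ∨ σ = 0 := by
    rw [minmod] at hσ
    split_ifs at hσ with h1 h2
    · left
      obtain ⟨ha, hb, hc⟩ := h1
      have hσa : σ ≤ (ρi - ρm) / Δx := by rw [hσ]; exact min_le_left _ _
      have hσc : σ ≤ (ρp - ρi) / Δx := by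
        rw [hσ]; exact le_trans (min_le_right _ _) (min_le_right _ _)
      have hσ0 : 0 ≤ σ := by rw [hσ]; positivity
      refine ⟨hσ0, ?_, ?_⟩
      · calc σ * Δx ≤ (ρi - ρm) / Δx * Δx := by nlinarith
          _ = ρi - ρm := by field_simp
      · calc σ * Δx ≤ (ρp - ρi) / Δx * Δx := by nlinarith
          _ = ρp - ρi := by field_simp
    · right; left
      obtain ⟨ha, hb, hc⟩ := h2
      have hσa : (ρi - ρm) / Δx ≤ σ := by rw [hσ]; exact le_max_left _ _
      have hσc : (ρp - ρi) / Δx ≤ σ := by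
        rw [hσ]; exact le_trans (le_max_right _ _) (le_max_right _ _)
      have hσ0 : σ ≤ 0 := by
        rw [hσ]; exact max_le ha.le (max_le hb.le hc.le)
      refine ⟨hσ0, ?_, ?_⟩
      · calc ρi - ρm = (ρi - ρm) / Δx * Δx := by field_simp
          _ ≤ σ * Δx := by nlinarith
      · calc ρp - ρi = (ρp - ρi) / Δx * Δx := by field_simp
          _ ≤ σ * Δx := by nlinarith
    · right; right; exact hσ
  have h1 : min ρm (min ρi ρp) ≤ ρi := le_trans (min_le_right _ _) (min_le_left _ _)
  have h2 : ρi ≤ max ρm (max ρi ρp) := le_trans (le_max_left _ _) (le_max_right _ _)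
  have h3 : min ρm (min ρi ρp) ≤ ρm := min_le_left _ _
  have h4 : ρm ≤ max ρm (max ρi ρp) := le_max_left _ _
  have h5 : min ρm (min ρi ρp) ≤ ρp := le_trans (min_le_right _ _) (min_le_right _ _)
  have h6 : ρp ≤ max ρm (max ρi ρp) := le_trans (le_max_right _ _) (le_max_right _ _)
  subst hE hW
  rcases key with ⟨hs, ha, hb⟩ | ⟨hs, ha, hb⟩ | hs
  · exact ⟨⟨by nlinarith, by nlinarith⟩, ⟨by nlinarith, by nlinarith⟩⟩
  · exact ⟨⟨by nlinarith, by nlinarith⟩, ⟨by nlinarith, by nlinarith⟩⟩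
  · subst hs
    simp only [mul_zero, add_zero, sub_zero]
    exact ⟨⟨h1, h2⟩, ⟨h1, h2⟩⟩
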